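/- Assume a(s)/s^k → a_∞ and f(s)/e^{2βs} → f_∞ as s → +∞ with k, β, a_∞, f_∞ > 0. Then there exists r ∈ ℝ with f(r) > 0, f(s) ≥ 0 for s > r, and the Keller–Osserman integral ∫_{g⁻¹(r)}^{+∞} ds/√(F(g(s))) is finite, where F(t) = ∫_r^t f. -/

import Mathlib

open Filter Topology MeasureTheory

lemma aux_integrable (a f : ℝ → ℝ) (hac : Continuous a) (hfc : Continuous f)
    (m c2 β r : ℝ) (hm : 0 < m) (hc2 : 0 < c2) (hβ : 0 < β)
    (haexp : ∀ t, r ≤ t → a t ≤ Real.exp (β * t))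
    (hF1 : ∀ t, r ≤ t → m * (t - r) ≤ ∫ τ in r..t, f τ)
    (hF2 : ∀ t, r + 1 ≤ t → c2 * Real.exp (2 * β * t) ≤ ∫ τ in r..t, f τ) :
    IntegrableOn (fun t => Real.sqrt (a t) * (1 / Real.sqrt (∫ τ in r..t, f τ)))
      (Set.Ici r) := by
  have hFc : Continuous fun t => ∫ τ in r..t, f τ :=
    intervalIntegral.continuous_primitive (fun p q => hfc.intervalIntegrable p q) r
  have hum : Measurable fun t => Real.sqrt (a t) * (1 / Real.sqrt (∫ τ in r..t, f τ)) :=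
    ((Real.continuous_sqrt.comp hac).measurable).mul
      (Measurable.div measurable_const (Real.continuous_sqrt.comp hFc).measurable)
  have hunorm : ∀ t, ‖Real.sqrt (a t) * (1 / Real.sqrt (∫ τ in r..t, f τ))‖
      = Real.sqrt (a t) * (1 / Real.sqrt (∫ τ in r..t, f τ)) := by
    intro t
    apply Real.norm_of_nonneg
    positivity
  rw [← Set.Icc_union_Ici_eq_Ici (by linarith : r ≤ r + 1)]
  apply IntegrableOn.union
  · -- on Icc r (r+1)
    have hmaj : IntegrableOn
        (fun t => (Real.sqrt (Real.exp (β * (r + 1))) / Real.sqrt m) * (t - r) ^ (-(1/2) : ℝ))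
        (Set.Icc r (r + 1)) := by
      apply Integrable.const_mul
      have h1 : IntervalIntegrable (fun x : ℝ => x ^ (-(1/2) : ℝ)) volume 0 1 :=
        intervalIntegral.intervalIntegrable_rpow' (by norm_num)
      have h2 := h1.comp_sub_right r
      rw [zero_add] at h2
      have h3 := (intervalIntegrable_iff_integrableOn_Icc_of_le (by linarith : r ≤ 1 + r)).1 h2
      rw [add_comm r 1]
      exact h3
    apply Integrable.mono' hmaj (hum.aestronglyMeasurable.restrict)
    filter_upwards [ae_restrict_mem measurableSet_Icc] with t ht
    rw [hunorm]
    rcases eq_or_lt_of_le ht.1 with h | h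
    · subst h
      simp [intervalIntegral.integral_same, Real.sqrt_zero, div_zero, sub_self,
        Real.zero_rpow (by norm_num : (-(1/2) : ℝ) ≠ 0)]
    · have htr : 0 < t - r := sub_pos.2 h
      have hFt : m * (t - r) ≤ ∫ τ in r..t, f τ := hF1 t ht.1
      have hFpos : 0 < ∫ τ in r..t, f τ := lt_of_lt_of_le (by positivity) hFt
      have h4 : Real.sqrt m * Real.sqrt (t - r) ≤ Real.sqrt (∫ τ in r..t, f τ) := by
        rw [← Real.sqrt_mul hm.le]
        exact Real.sqrt_le_sqrt hFt
      have hsm : 0 < Real.sqrt m := Real.sqrt_pos.2 hm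
      have hst : 0 < Real.sqrt (t - r) := Real.sqrt_pos.2 htr
      have h5 : (1 : ℝ) / Real.sqrt (∫ τ in r..t, f τ) ≤ 1 / (Real.sqrt m * Real.sqrt (t - r)) :=
        one_div_le_one_div_of_le (by positivity) h4
      have h6 : Real.sqrt (a t) ≤ Real.sqrt (Real.exp (β * (r + 1))) := by
        apply Real.sqrt_le_sqrt
        refine (haexp t ht.1).trans (Real.exp_le_exp.2 ?_)
        nlinarith [ht.2]
      have h7 : (t - r) ^ (-(1/2) : ℝ) = 1 / Real.sqrt (t - r) := by
        rw [Real.rpow_neg htr.le, Real.sqrt_eq_rpow]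
        norm_num
      rw [h7]
      calc Real.sqrt (a t) * (1 / Real.sqrt (∫ τ in r..t, f τ))
          ≤ Real.sqrt (Real.exp (β * (r + 1))) * (1 / (Real.sqrt m * Real.sqrt (t - r))) :=
            mul_le_mul h6 h5 (by positivity) (by positivity)
        _ = Real.sqrt (Real.exp (β * (r + 1))) / Real.sqrt m * (1 / Real.sqrt (t - r)) := by
            rw [one_div, one_div, mul_inv, div_eq_mul_inv]
            ring
  · -- on Ici (r+1)
    have hmaj : IntegrableOn (fun t => (1 / Real.sqrt c2) * Real.exp (-(β / 2) * t))
        (Set.Ici (r + 1)) := by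
      rw [integrableOn_Ici_iff_integrableOn_Ioi]
      exact (exp_neg_integrableOn_Ioi (r + 1) (by linarith : (0:ℝ) < β / 2)).const_mul _
    apply Integrable.mono' hmaj (hum.aestronglyMeasurable.restrict)
    filter_upwards [ae_restrict_mem measurableSet_Ici] with t ht
    rw [hunorm]
    have ht' : r + 1 ≤ t := ht
    have htr : r ≤ t := by linarith
    have hFt := hF2 t ht'
    have hc2s : 0 < Real.sqrt c2 := Real.sqrt_pos.2 hc2
    have hse : Real.sqrt (c2 * Real.exp (2 * β * t)) = Real.sqrt c2 * Real.exp (β * t) := by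
      rw [Real.sqrt_mul hc2.le, ← Real.exp_half]
      rw [show 2 * β * t / 2 = β * t by ring]
    have h4 : Real.sqrt c2 * Real.exp (β * t) ≤ Real.sqrt (∫ τ in r..t, f τ) := by
      rw [← hse]
      exact Real.sqrt_le_sqrt hFt
    have h5 : (1 : ℝ) / Real.sqrt (∫ τ in r..t, f τ) ≤ 1 / (Real.sqrt c2 * Real.exp (β * t)) :=
      one_div_le_one_div_of_le (by positivity) h4
    have h6 : Real.sqrt (a t) ≤ Real.exp (β * t / 2) := by
      rw [Real.exp_half]
      exact Real.sqrt_le_sqrt (haexp t htr)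
    calc Real.sqrt (a t) * (1 / Real.sqrt (∫ τ in r..t, f τ))
        ≤ Real.exp (β * t / 2) * (1 / (Real.sqrt c2 * Real.exp (β * t))) :=
          mul_le_mul h6 h5 (by positivity) (by positivity)
      _ = (1 / Real.sqrt c2) * Real.exp (-(β / 2) * t) := by
          have hexp : Real.exp (β * t / 2) * (Real.exp (β * t))⁻¹ = Real.exp (-(β / 2) * t) := by
            rw [← Real.exp_neg, ← Real.exp_add]
            congr 1
            ring
          rw [one_div, one_div, mul_inv, ← mul_assoc,
            mul_comm (Real.exp (β * t / 2)) (Real.sqrt c2)⁻¹, mul_assoc, hexp]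

theorem stmt_5 (a f g ginv : ℝ → ℝ) (ha : ContDiff ℝ 1 a) (ν : ℝ) (hν : 0 < ν)
    (hab : ∀ s, ν ≤ a s) (hf : ContDiff ℝ 1 f)
    (hg : ∀ s, HasDerivAt g (1 / Real.sqrt (a (g s))) s) (hg0 : g 0 = 0)
    (hinv1 : ∀ s, ginv (g s) = s) (hinv2 : ∀ t, g (ginv t) = t)
    (k β aInf fInf : ℝ) (hk : 0 < k) (hβ : 0 < β) (haInf : 0 < aInf) (hfInf : 0 < fInf)
    (haAsym : Tendsto (fun s => a s / s ^ k) atTop (𝓝 aInf))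
    (hfAsym : Tendsto (fun s => f s / Real.exp (2 * β * s)) atTop (𝓝 fInf)) :
    ∃ r : ℝ, 0 < f r ∧ (∀ s, r < s → 0 ≤ f s) ∧
      IntegrableOn (fun s => 1 / Real.sqrt (∫ τ in r..(g s), f τ))
        (Set.Ici (ginv r)) := by
  have hsq : ∀ t, 0 < Real.sqrt (a t) := fun t => Real.sqrt_pos.2 (hν.trans_le (hab t))
  have hfc : Continuous f := hf.continuous
  have hgm : StrictMono g := by
    apply strictMono_of_deriv_pos
    intro x
    rw [(hg x).deriv]
    exact div_pos one_pos (hsq (g x))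
  have hA0 : Tendsto (fun s => a s * Real.exp (-β * s)) atTop (𝓝 0) := by
    have h1 := haAsym.mul (tendsto_rpow_mul_exp_neg_mul_atTop_nhds_zero k β hβ)
    rw [mul_zero] at h1
    apply h1.congr'
    filter_upwards [eventually_gt_atTop (0:ℝ)] with s hs
    have hsk : s ^ k ≠ 0 := (Real.rpow_pos_of_pos hs k).ne'
    field_simp
  have hev : ∀ᶠ s in atTop, fInf / 2 * Real.exp (2 * β * s) ≤ f s ∧ a s ≤ Real.exp (β * s) := by
    have h1 := hfAsym.eventually (eventually_gt_nhds (by linarith : fInf / 2 < fInf))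
    have h2 := hA0.eventually (eventually_lt_nhds (by norm_num : (0:ℝ) < 1))
    filter_upwards [h1, h2] with s hs1 hs2
    have he1 : (0:ℝ) < Real.exp (2 * β * s) := Real.exp_pos _
    have he2 : (0:ℝ) < Real.exp (β * s) := Real.exp_pos _
    constructor
    · rw [lt_div_iff₀ he1] at hs1
      linarith
    · rw [neg_mul, Real.exp_neg] at hs2
      have h3 : a s / Real.exp (β * s) < 1 := by rwa [div_eq_mul_inv]
      have := (div_lt_one he2).1 h3
      linarith
  obtain ⟨r, hr⟩ := eventually_atTop.1 hev
  have hfr : ∀ s, r ≤ s → fInf / 2 * Real.exp (2 * β * s) ≤ f s := fun s hs => (hr s hs).1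
  have har : ∀ s, r ≤ s → a s ≤ Real.exp (β * s) := fun s hs => (hr s hs).2
  have hfpos : ∀ s, r ≤ s → 0 < f s := fun s hs =>
    lt_of_lt_of_le (by positivity) (hfr s hs)
  refine ⟨r, hfpos r le_rfl, fun s hs => (hfpos s hs.le).le, ?_⟩
  have hm : 0 < fInf / 2 * Real.exp (2 * β * r) := by positivity
  have hF1 : ∀ t, r ≤ t → fInf / 2 * Real.exp (2 * β * r) * (t - r) ≤ ∫ τ in r..t, f τ := by
    intro t ht
    have h1 : (∫ _ in r..t, (fInf / 2 * Real.exp (2 * β * r))) ≤ ∫ τ in r..t, f τ := by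
      apply intervalIntegral.integral_mono_on ht intervalIntegrable_const
        (hfc.intervalIntegrable r t)
      intro x hx
      calc fInf / 2 * Real.exp (2 * β * r) ≤ fInf / 2 * Real.exp (2 * β * x) := by
            apply mul_le_mul_of_nonneg_left (Real.exp_le_exp.2 (by nlinarith [hx.1]))
              (by linarith)
        _ ≤ f x := hfr x hx.1
    rwa [intervalIntegral.integral_const, smul_eq_mul, mul_comm] at h1
  have hF2 : ∀ t, r + 1 ≤ t →
      (fInf / 2 * Real.exp (-(2 * β))) * Real.exp (2 * β * t) ≤ ∫ τ in r..t, f τ := by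
    intro t ht
    have hrt1 : r ≤ t - 1 := by linarith
    have hsplit : (∫ τ in r..(t - 1), f τ) + (∫ τ in (t - 1)..t, f τ) = ∫ τ in r..t, f τ :=
      intervalIntegral.integral_add_adjacent_intervals
        (hfc.intervalIntegrable r (t - 1)) (hfc.intervalIntegrable (t - 1) t)
    have h1 : 0 ≤ ∫ τ in r..(t - 1), f τ :=
      intervalIntegral.integral_nonneg hrt1 (fun x hx => (hfpos x hx.1).le)
    have h2 : (∫ _ in (t - 1)..t, (fInf / 2 * Real.exp (2 * β * (t - 1)))) ≤
        ∫ τ in (t - 1)..t, f τ := by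
      apply intervalIntegral.integral_mono_on (by linarith) intervalIntegrable_const
        (hfc.intervalIntegrable _ _)
      intro x hx
      calc fInf / 2 * Real.exp (2 * β * (t - 1)) ≤ fInf / 2 * Real.exp (2 * β * x) := by
            apply mul_le_mul_of_nonneg_left (Real.exp_le_exp.2 (by nlinarith [hx.1]))
              (by linarith)
        _ ≤ f x := hfr x (by linarith [hx.1])
    rw [intervalIntegral.integral_const, smul_eq_mul] at h2
    have h3 : fInf / 2 * Real.exp (-(2 * β)) * Real.exp (2 * β * t)
        = (t - (t - 1)) * (fInf / 2 * Real.exp (2 * β * (t - 1))) := by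
      rw [mul_assoc, ← Real.exp_add, show -(2 * β) + 2 * β * t = 2 * β * (t - 1) by ring,
        show t - (t - 1) = (1:ℝ) by ring, one_mul]
    rw [← hsplit]
    linarith [h1, h2, h3.le, h3.ge]
  have haux := aux_integrable a f ha.continuous hfc (fInf / 2 * Real.exp (2 * β * r))
    (fInf / 2 * Real.exp (-(2 * β))) β r hm (by positivity) hβ har hF1 hF2
  have himg : g '' Set.Ici (ginv r) = Set.Ici r := by
    ext t
    constructor
    · rintro ⟨s, hs, rfl⟩
      have := hgm.monotone hs
      rwa [hinv2] at this
    · intro ht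
      refine ⟨ginv t, ?_, hinv2 t⟩
      exact hgm.le_iff_le.1 (show g (ginv r) ≤ g (ginv t) by rw [hinv2, hinv2]; exact ht)
  have key := integrableOn_image_iff_integrableOn_abs_deriv_smul
    (f := g) (f' := fun x => 1 / Real.sqrt (a (g x))) (s := Set.Ici (ginv r)) measurableSet_Ici
    (fun x _ => (hg x).hasDerivWithinAt) hgm.injective.injOn
    (fun t => Real.sqrt (a t) * (1 / Real.sqrt (∫ τ in r..t, f τ)))
  rw [himg] at key
  have h2 := key.1 haux
  refine h2.congr_fun (fun x _ => ?_) measurableSet_Ici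
  simp only [smul_eq_mul]
  have hpos := hsq (g x)
  rw [abs_of_pos (div_pos one_pos hpos), ← mul_assoc, one_div, inv_mul_cancel₀ hpos.ne', one_mul]
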